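/- There exists a universal constant B ≥ 1 such that for every integer d ≥ 1 and every nonempty finite set A of vectors in the closed Euclidean unit ball of ℝ^d whose ℝ-linear span is all of ℝ^d, there exist a subset C ⊆ A of cardinality at most B·d whose span is all of ℝ^d, and a function π : C → [0,1] with Σ_{α∈C} π(α) = 1, such that the d×d matrix V(π) = Σ_{α∈C} π(α)·α αᵀ is invertible and for every a ∈ A one has aᵀ V(π)⁻¹ a ≤ 2d. -/

import Mathlib

open Matrix Finset

namespace CoreSetAux

variable {d : ℕ}

/-- the design matrix of a finite set of vectors -/
noncomputable def Msum (C : Finset (EuclideanSpace ℝ (Fin d))) : Matrix (Fin d) (Fin d) ℝ :=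
  ∑ α ∈ C, vecMulVec (α : Fin d → ℝ) (α : Fin d → ℝ)

lemma vecMulVec_mulVec (u v x : Fin d → ℝ) : vecMulVec u v *ᵥ x = (v ⬝ᵥ x) • u := by
  ext i
  simp [vecMulVec_apply, mulVec, dotProduct, Finset.mul_sum, mul_comm, mul_left_comm]

lemma finset_sum_mulVec {ι : Type*} (s : Finset ι) (A : ι → Matrix (Fin d) (Fin d) ℝ)
    (x : Fin d → ℝ) : (∑ i ∈ s, A i) *ᵥ x = ∑ i ∈ s, A i *ᵥ x := by
  classical
  induction s using Finset.induction_on with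
  | empty => simp
  | insert _ _ h ih => simp [Finset.sum_insert h, Matrix.add_mulVec, ih]

lemma Msum_mulVec (C : Finset (EuclideanSpace ℝ (Fin d))) (x : Fin d → ℝ) :
    Msum C *ᵥ x = ∑ α ∈ C, ((α : Fin d → ℝ) ⬝ᵥ x) • (α : Fin d → ℝ) := by
  rw [Msum, finset_sum_mulVec]
  exact Finset.sum_congr rfl fun α _ => vecMulVec_mulVec _ _ _

lemma dotProduct_finset_sum {ι : Type*} (s : Finset ι) (f : ι → Fin d → ℝ) (x : Fin d → ℝ) :
    x ⬝ᵥ (∑ i ∈ s, f i) = ∑ i ∈ s, x ⬝ᵥ f i := by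
  classical
  induction s using Finset.induction_on with
  | empty => simp
  | insert _ _ h ih => simp [Finset.sum_insert h, dotProduct_add, ih]

lemma dot_vecMulVec (u v x : Fin d → ℝ) :
    x ⬝ᵥ (vecMulVec u v *ᵥ x) = (u ⬝ᵥ x) * (v ⬝ᵥ x) := by
  rw [vecMulVec_mulVec, dotProduct_smul, smul_eq_mul, dotProduct_comm x u, mul_comm]

lemma vecMulVec_posSemidef (v : Fin d → ℝ) : (vecMulVec v v).PosSemidef := by
  refine PosSemidef.of_dotProduct_mulVec_nonneg ?_ ?_
  · ext i j; simp [vecMulVec_apply, mul_comm]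
  · intro x
    simp only [star_trivial, dot_vecMulVec]
    exact mul_self_nonneg _

lemma Msum_posSemidef (C : Finset (EuclideanSpace ℝ (Fin d))) : (Msum C).PosSemidef := by
  classical
  refine Finset.sum_induction _ _ (fun a b ha hb => ha.add hb) Matrix.PosSemidef.zero ?_
  exact fun α _ => vecMulVec_posSemidef _

lemma transpose_eq_self_of_posSemidef {M : Matrix (Fin d) (Fin d) ℝ} (h : M.PosSemidef) :
    Mᵀ = M := by
  have := h.isHermitian
  rwa [Matrix.IsHermitian, conjTranspose_eq_transpose_of_trivial] at this

lemma dot_mulVec_symm {N : Matrix (Fin d) (Fin d) ℝ} (h : N.PosSemidef) (x y : Fin d → ℝ) :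
    x ⬝ᵥ N *ᵥ y = y ⬝ᵥ N *ᵥ x := by
  rw [dotProduct_mulVec x, dotProduct_comm, ← mulVec_transpose, transpose_eq_self_of_posSemidef h]

/-- positive semidefinite + invertible implies positive definite -/
lemma posDef_of_posSemidef_isUnit {M : Matrix (Fin d) (Fin d) ℝ} (h : M.PosSemidef)
    (hu : IsUnit M) : M.PosDef := by
  refine PosDef.of_dotProduct_mulVec_pos h.isHermitian (fun x hx => ?_)
  rcases (h.dotProduct_mulVec_nonneg x).lt_or_eq with h' | h'
  · simpa using h'
  · exfalso
    apply hx
    have hMx : M *ᵥ x = 0 := (h.dotProduct_mulVec_zero_iff x).1 h'.symm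
    have hinj := Matrix.mulVec_injective_iff_isUnit.mpr hu
    have : M *ᵥ x = M *ᵥ 0 := by simpa using hMx
    exact hinj this

/-- a spanning set gives a positive definite design matrix -/
lemma posDef_of_span {C : Finset (EuclideanSpace ℝ (Fin d))}
    (h : Submodule.span ℝ (C : Set (EuclideanSpace ℝ (Fin d))) = ⊤) : (Msum C).PosDef := by
  refine PosDef.of_dotProduct_mulVec_pos (Msum_posSemidef C).isHermitian (fun x hx => ?_)
  rcases ((Msum_posSemidef C).dotProduct_mulVec_nonneg x).lt_or_eq with h' | h'
  · simpa using h'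
  exfalso
  apply hx
  have h0 : ∀ α ∈ C, (α : Fin d → ℝ) ⬝ᵥ x = 0 := by
    intro α hα
    have hsum : x ⬝ᵥ Msum C *ᵥ x = ∑ β ∈ C, ((β : Fin d → ℝ) ⬝ᵥ x) * ((β : Fin d → ℝ) ⬝ᵥ x) := by
      rw [Msum, finset_sum_mulVec, dotProduct_finset_sum]
      exact Finset.sum_congr rfl fun β _ => dot_vecMulVec _ _ _
    have hz : ∑ β ∈ C, ((β : Fin d → ℝ) ⬝ᵥ x) * ((β : Fin d → ℝ) ⬝ᵥ x) = 0 := by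
      rw [← hsum]
      simpa using h'.symm
    have := (Finset.sum_eq_zero_iff_of_nonneg (fun β _ => mul_self_nonneg _)).1 hz α hα
    exact mul_self_eq_zero.1 this
  -- every element of the span pairs to zero with x
  have hall : ∀ y : EuclideanSpace ℝ (Fin d), (y : Fin d → ℝ) ⬝ᵥ x = 0 := by
    intro y
    have hy : y ∈ Submodule.span ℝ (C : Set (EuclideanSpace ℝ (Fin d))) := h ▸ Submodule.mem_top
    induction hy using Submodule.span_induction with
    | mem z hz => exact h0 z hz
    | zero => simp [dotProduct]
    | add z w _ _ hz hw =>
        have : ((z + w : EuclideanSpace ℝ (Fin d)) : Fin d → ℝ) ⬝ᵥ x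
            = (z : Fin d → ℝ) ⬝ᵥ x + (w : Fin d → ℝ) ⬝ᵥ x := add_dotProduct _ _ _
        rw [this, hz, hw, add_zero]
    | smul c z _ hz =>
        have : ((c • z : EuclideanSpace ℝ (Fin d)) : Fin d → ℝ) ⬝ᵥ x
            = c * ((z : Fin d → ℝ) ⬝ᵥ x) := smul_dotProduct _ _ _
        rw [this, hz, mul_zero]
  have : x ⬝ᵥ x = 0 := hall (WithLp.toLp 2 x)
  exact dotProduct_self_eq_zero.1 this

/-- invertibility of the design matrix forces spanning -/
lemma span_top_of_isUnit {C : Finset (EuclideanSpace ℝ (Fin d))} (h : IsUnit (Msum C)) :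
    Submodule.span ℝ (C : Set (EuclideanSpace ℝ (Fin d))) = ⊤ := by
  by_contra hne
  have hbot : (Submodule.span ℝ (C : Set (EuclideanSpace ℝ (Fin d))))ᗮ ≠ ⊥ := by
    intro hb
    exact hne (Submodule.orthogonal_eq_bot_iff.1 hb)
  obtain ⟨x, hxmem, hx0⟩ := Submodule.exists_mem_ne_zero_of_ne_bot hbot
  have hdot : ∀ α ∈ C, (α : Fin d → ℝ) ⬝ᵥ (x : Fin d → ℝ) = 0 := by
    intro α hα
    have := (Submodule.mem_orthogonal _ x).1 hxmem α (Submodule.subset_span hα)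
    simpa [EuclideanSpace, PiLp.inner_apply, RCLike.inner_apply, dotProduct,
      mul_comm] using this
  have hMx : Msum C *ᵥ (x : Fin d → ℝ) = 0 := by
    rw [Msum_mulVec]
    exact Finset.sum_eq_zero fun α hα => by rw [hdot α hα, zero_smul]
  have hinj := Matrix.mulVec_injective_iff_isUnit.mpr h
  have : (x : Fin d → ℝ) = 0 := by
    apply hinj
    simpa using hMx
  exact hx0 (by ext i; exact congrFun this i)

/-- leverage scores are at most one -/
lemma dot_inv_le_one {M : Matrix (Fin d) (Fin d) ℝ} (hM : M.PosDef) {a : Fin d → ℝ}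
    (h : (M - vecMulVec a a).PosSemidef) : a ⬝ᵥ M⁻¹ *ᵥ a ≤ 1 := by
  have hdet : IsUnit M.det := hM.det_pos.ne'.isUnit
  set y := M⁻¹ *ᵥ a with hy
  set u := a ⬝ᵥ M⁻¹ *ᵥ a with hu
  have hMy : M *ᵥ y = a := by
    rw [hy, mulVec_mulVec, Matrix.mul_nonsing_inv _ hdet, one_mulVec]
  have h2 := h.dotProduct_mulVec_nonneg y
  simp only [star_trivial, Matrix.sub_mulVec, dotProduct_sub, hMy] at h2
  have hya : y ⬝ᵥ a = u := by rw [dotProduct_comm, hu, hy]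
  have hquad : y ⬝ᵥ (vecMulVec a a *ᵥ y) = u * u := by
    rw [dot_vecMulVec, dotProduct_comm a y, hya]
  rw [hya, hquad] at h2
  nlinarith [h2]

/-- monotonicity of the inverse quadratic form -/
lemma dot_inv_mono {M N : Matrix (Fin d) (Fin d) ℝ} (hM : M.PosDef) (hN : N.PosDef)
    (hMN : (M - N).PosSemidef) (a : Fin d → ℝ) :
    a ⬝ᵥ M⁻¹ *ᵥ a ≤ a ⬝ᵥ N⁻¹ *ᵥ a := by
  set x := M⁻¹ *ᵥ a with hx
  set y := N⁻¹ *ᵥ a with hyy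
  have hMx : M *ᵥ x = a := by
    rw [hx, mulVec_mulVec, Matrix.mul_nonsing_inv _ hM.det_pos.ne'.isUnit, one_mulVec]
  have hNy : N *ᵥ y = a := by
    rw [hyy, mulVec_mulVec, Matrix.mul_nonsing_inv _ hN.det_pos.ne'.isUnit, one_mulVec]
  set u := a ⬝ᵥ M⁻¹ *ᵥ a with hu
  set s := a ⬝ᵥ N⁻¹ *ᵥ a with hs
  -- expand 0 ≤ (x - y)ᵀ N (x - y)
  have h0 := hN.posSemidef.dotProduct_mulVec_nonneg (x - y)
  simp only [star_trivial, Matrix.sub_mulVec, Matrix.mulVec_sub, dotProduct_sub, sub_dotProduct] at h0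
  have hyNx : y ⬝ᵥ N *ᵥ x = a ⬝ᵥ x := by
    rw [dot_mulVec_symm hN.posSemidef y x, hNy, dotProduct_comm]
  have hxNy : x ⬝ᵥ N *ᵥ y = x ⬝ᵥ a := by rw [hNy]
  have hyNy : y ⬝ᵥ N *ᵥ y = a ⬝ᵥ y := by rw [hNy, dotProduct_comm]
  -- xᵀ N x ≤ xᵀ M x = aᵀ x
  have h1 := hMN.dotProduct_mulVec_nonneg x
  simp only [star_trivial, Matrix.sub_mulVec, dotProduct_sub, hMx] at h1
  have hax : a ⬝ᵥ x = u := hu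
  have hay : a ⬝ᵥ y = s := hs
  have hxa : x ⬝ᵥ a = u := by rw [dotProduct_comm, hax]
  rw [hyNx, hxNy, hyNy] at h0
  rw [hxa] at h1
  linarith

/-- trace identity : `tr (A ⬝ uuᵀ) = uᵀ A u` -/
lemma trace_mul_vecMulVec (A : Matrix (Fin d) (Fin d) ℝ) (u : Fin d → ℝ) :
    (A * vecMulVec u u).trace = u ⬝ᵥ A *ᵥ u := by
  simp only [Matrix.trace, Matrix.diag, Matrix.mul_apply, vecMulVec_apply, dotProduct, mulVec,
    Finset.mul_sum]
  exact Finset.sum_congr rfl fun i _ => Finset.sum_congr rfl fun j _ => by ring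

/-- the sum of leverage scores equals the dimension -/
lemma sum_dot_inv (C : Finset (EuclideanSpace ℝ (Fin d))) (h : IsUnit (Msum C).det) :
    ∑ α ∈ C, (α : Fin d → ℝ) ⬝ᵥ (Msum C)⁻¹ *ᵥ (α : Fin d → ℝ) = (d : ℝ) := by
  have : ∀ α ∈ C, (α : Fin d → ℝ) ⬝ᵥ (Msum C)⁻¹ *ᵥ (α : Fin d → ℝ)
      = ((Msum C)⁻¹ * vecMulVec (α : Fin d → ℝ) (α : Fin d → ℝ)).trace := by
    intro α _
    rw [trace_mul_vecMulVec]
  rw [Finset.sum_congr rfl this, ← Matrix.trace_sum, ← Finset.mul_sum, ← Msum,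
    Matrix.nonsing_inv_mul _ h, Matrix.trace_one]
  simp

/-- matrix determinant lemma, rank one update -/
lemma det_add_vecMulVec {M : Matrix (Fin d) (Fin d) ℝ} (h : IsUnit M.det) (u w : Fin d → ℝ) :
    (M + vecMulVec u w).det = M.det * (1 + w ⬝ᵥ M⁻¹ *ᵥ u) := by
  rw [show vecMulVec u w = replicateCol (Fin 1) u * replicateRow (Fin 1) w from
    vecMulVec_eq (Fin 1) u w, Matrix.det_add_mul (replicateCol (Fin 1) u) (replicateRow (Fin 1) w) h]
  congr 1
  rw [Matrix.det_unique]
  simp only [Matrix.add_apply, Matrix.one_apply_eq, Matrix.mul_apply, Matrix.replicateRow_apply,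
    Matrix.replicateCol_apply, dotProduct, mulVec, Finset.sum_mul, Finset.mul_sum]
  congr 1
  rw [Finset.sum_comm]
  exact Finset.sum_congr rfl fun i _ => Finset.sum_congr rfl fun j _ => by ring


/-- negation trick for the determinant lemma -/
lemma det_sub_vecMulVec {M : Matrix (Fin d) (Fin d) ℝ} (h : IsUnit M.det) (u : Fin d → ℝ) :
    (M - vecMulVec u u).det = M.det * (1 - u ⬝ᵥ M⁻¹ *ᵥ u) := by
  have hneg : vecMulVec (-u) u = -vecMulVec u u := by
    ext i j; simp [vecMulVec_apply]
  have := det_add_vecMulVec h (-u) u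
  rw [hneg] at this
  rw [sub_eq_add_neg, this, Matrix.mulVec_neg, dotProduct_neg, ← sub_eq_add_neg]

/-- Main construction: a subset of size `min |A| (2d)` maximizing the determinant of the
design matrix has all leverage scores at most one. -/
lemma main (d : ℕ) (hd : 1 ≤ d) (A : Finset (EuclideanSpace ℝ (Fin d))) (hA : A.Nonempty)
    (hspan : Submodule.span ℝ (A : Set (EuclideanSpace ℝ (Fin d))) = ⊤) :
    ∃ C : Finset (EuclideanSpace ℝ (Fin d)), C ⊆ A ∧ C.card ≤ 2 * d ∧ C.Nonempty ∧
      IsUnit (Msum C).det ∧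
      ∀ a ∈ A, (a : Fin d → ℝ) ⬝ᵥ (Msum C)⁻¹ *ᵥ (a : Fin d → ℝ) ≤ 1 := by
  classical
  set k := min A.card (2 * d) with hk
  have hk_le_A : k ≤ A.card := min_le_left _ _
  have hk_le_2d : k ≤ 2 * d := min_le_right _ _
  -- a spanning subset of cardinality k
  obtain ⟨b, hbA, hbspan, hbind⟩ :=
    exists_linearIndependent ℝ (A : Set (EuclideanSpace ℝ (Fin d)))
  set b' := A.filter (fun z => z ∈ b) with hb'
  have hb'A : b' ⊆ A := Finset.filter_subset _ _
  have hcoe : (b' : Set (EuclideanSpace ℝ (Fin d))) = b := by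
    ext z
    simp only [hb', Finset.coe_filter, Set.mem_setOf_eq, Finset.mem_coe]
    exact ⟨fun h => h.2, fun h => ⟨by exact_mod_cast hbA h, h⟩⟩
  have hb'ind : LinearIndependent ℝ (fun x => x : b' → EuclideanSpace ℝ (Fin d)) := by
    have h2 := hbind
    rw [← hcoe] at h2
    exact h2
  have hb'span : Submodule.span ℝ (b' : Set (EuclideanSpace ℝ (Fin d))) = ⊤ := by
    rw [hcoe, hbspan, hspan]
  have hcardb' : b'.card = d := by
    have h1 := finrank_span_finset_eq_card hb'ind
    rw [hb'span] at h1
    rw [← h1, finrank_top, finrank_euclideanSpace_fin]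
  have hdA : d ≤ A.card := by
    have := Finset.card_le_card hb'A
    omega
  have hbk : b'.card ≤ k := le_min (Finset.card_le_card hb'A) (by omega)
  obtain ⟨C₀, hbC₀, hC₀A, hC₀card⟩ := Finset.exists_subsuperset_card_eq hb'A hbk hk_le_A
  have hC₀span : Submodule.span ℝ ((C₀ : Set (EuclideanSpace ℝ (Fin d)))) = ⊤ := by
    apply top_unique
    calc (⊤ : Submodule ℝ (EuclideanSpace ℝ (Fin d)))
        = Submodule.span ℝ (b' : Set (EuclideanSpace ℝ (Fin d))) := hb'span.symm
      _ ≤ Submodule.span ℝ ((C₀ : Set (EuclideanSpace ℝ (Fin d)))) :=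
          Submodule.span_mono (by exact_mod_cast hbC₀)
  -- maximize the determinant over subsets of cardinality k
  have hpne : (A.powersetCard k).Nonempty := Finset.powersetCard_nonempty.2 hk_le_A
  obtain ⟨C, hCmem, hCmax⟩ :=
    Finset.exists_max_image (A.powersetCard k) (fun C => (Msum C).det) hpne
  obtain ⟨hCA, hCcard⟩ := Finset.mem_powersetCard.1 hCmem
  have hC₀mem : C₀ ∈ A.powersetCard k := Finset.mem_powersetCard.2 ⟨hC₀A, hC₀card⟩
  have hdet0 : 0 < (Msum C₀).det := (posDef_of_span hC₀span).det_pos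
  have hdetC : 0 < (Msum C).det := lt_of_lt_of_le hdet0 (hCmax _ hC₀mem)
  have hudet : IsUnit (Msum C).det := hdetC.ne'.isUnit
  have hPD : (Msum C).PosDef :=
    posDef_of_posSemidef_isUnit (Msum_posSemidef C) ((Matrix.isUnit_iff_isUnit_det _).2 hudet)
  have hk_pos : 1 ≤ k := le_min hA.card_pos (by omega)
  have hCne : C.Nonempty := Finset.card_pos.1 (hCcard ▸ hk_pos)
  refine ⟨C, hCA, hCcard ▸ hk_le_2d, hCne, hudet, ?_⟩
  intro a ha
  by_cases hain : a ∈ C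
  · -- a is in C : its leverage is at most 1
    have herase : Msum (C.erase a) = Msum C - vecMulVec (a : Fin d → ℝ) (a : Fin d → ℝ) := by
      refine eq_sub_of_add_eq ?_
      rw [Msum, Msum]
      exact Finset.sum_erase_add _ _ hain
    exact dot_inv_le_one hPD (herase ▸ Msum_posSemidef (C.erase a))
  · -- a is outside C : use the exchange argument
    have hAk : k < A.card := by
      have : C ⊂ A := ⟨hCA, fun hsub => hain (hsub ha)⟩
      have := Finset.card_lt_card this
      omega
    have hk2d : k = 2 * d := by omega
    -- pick the element of C with minimal leverage
    obtain ⟨α, hαC, hαmin⟩ := Finset.exists_min_image C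
      (fun β => (β : Fin d → ℝ) ⬝ᵥ (Msum C)⁻¹ *ᵥ (β : Fin d → ℝ)) hCne
    set v := (α : Fin d → ℝ) ⬝ᵥ (Msum C)⁻¹ *ᵥ (α : Fin d → ℝ) with hv
    have hsumlev : ∑ β ∈ C, (β : Fin d → ℝ) ⬝ᵥ (Msum C)⁻¹ *ᵥ (β : Fin d → ℝ) = (d : ℝ) :=
      sum_dot_inv C hudet
    have hv_nonneg : 0 ≤ v := by
      have := (hPD.inv).posSemidef.dotProduct_mulVec_nonneg (α : Fin d → ℝ)
      simpa using this
    have hv_le : v ≤ 1 / 2 := by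
      have hce : (C.card : ℝ) * v ≤ (d : ℝ) := by
        rw [← hsumlev]
        have := Finset.card_nsmul_le_sum C
          (fun β => (β : Fin d → ℝ) ⬝ᵥ (Msum C)⁻¹ *ᵥ (β : Fin d → ℝ)) v
          (fun β hβ => hαmin β hβ)
        rwa [nsmul_eq_mul] at this
      rw [hCcard, hk2d] at hce
      push_cast at hce
      have hd1 : (1 : ℝ) ≤ (d : ℝ) := by exact_mod_cast hd
      nlinarith
    set N := Msum C - vecMulVec (α : Fin d → ℝ) (α : Fin d → ℝ) with hN
    have hNeq : N = Msum (C.erase α) := by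
      rw [hN]
      refine (eq_sub_of_add_eq ?_).symm
      rw [Msum, Msum]
      exact Finset.sum_erase_add _ _ hαC
    have hNpsd : N.PosSemidef := hNeq ▸ Msum_posSemidef (C.erase α)
    have hdetN : N.det = (Msum C).det * (1 - v) := det_sub_vecMulVec hudet _
    have hNdetpos : 0 < N.det := by
      rw [hdetN]
      have : (0 : ℝ) < 1 - v := by linarith
      exact mul_pos hdetC this
    have hNPD : N.PosDef :=
      posDef_of_posSemidef_isUnit hNpsd ((Matrix.isUnit_iff_isUnit_det _).2 hNdetpos.ne'.isUnit)
    -- the exchanged set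
    set C' := insert a (C.erase α) with hC'
    have hanotin : a ∉ C.erase α := fun hcon => hain (Finset.mem_of_mem_erase hcon)
    have hC'card : C'.card = k := by
      rw [hC', Finset.card_insert_of_notMem hanotin, Finset.card_erase_of_mem hαC, hCcard]
      omega
    have hC'A : C' ⊆ A := by
      intro z hz
      rcases Finset.mem_insert.1 hz with rfl | hz
      · exact ha
      · exact hCA (Finset.mem_of_mem_erase hz)
    have hC'mem : C' ∈ A.powersetCard k := Finset.mem_powersetCard.2 ⟨hC'A, hC'card⟩
    have hMC' : Msum C' = N + vecMulVec (a : Fin d → ℝ) (a : Fin d → ℝ) := by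
      rw [hC', Msum, Finset.sum_insert hanotin, ← Msum, ← hNeq, add_comm]
    set s := (a : Fin d → ℝ) ⬝ᵥ N⁻¹ *ᵥ (a : Fin d → ℝ) with hs
    have hdetC' : (Msum C').det = N.det * (1 + s) := by
      rw [hMC', det_add_vecMulVec hNdetpos.ne'.isUnit]
    have hle : (Msum C').det ≤ (Msum C).det := hCmax _ hC'mem
    have hkey : (1 - v) * (1 + s) ≤ 1 := by
      rw [hdetC', hdetN] at hle
      have h1 := hdetC
      nlinarith
    have hs_le_one : s ≤ 1 := by nlinarith
    have hsub : (Msum C - N).PosSemidef := by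
      rw [hN]
      simpa using vecMulVec_posSemidef (α : Fin d → ℝ)
    calc (a : Fin d → ℝ) ⬝ᵥ (Msum C)⁻¹ *ᵥ (a : Fin d → ℝ) ≤ s := dot_inv_mono hPD hNPD hsub _
      _ ≤ 1 := hs_le_one

end CoreSetAux

/-- **Core set (near-optimal design) for A** (Lemma 2): there is a universal constant
`B ≥ 1` such that every nonempty finite spanning subset `A` of the closed Euclidean
unit ball of `ℝ^d` admits a subset `C ⊆ A` of size at most `B·d` spanning `ℝ^d`, and a
probability distribution `π` on `C`, such that `V(π) = Σ_{α∈C} π(α)· α αᵀ` is invertible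
and `aᵀ V(π)⁻¹ a ≤ 2d` for every `a ∈ A`. -/
theorem core_set_exists :
    ∃ B : ℝ, 1 ≤ B ∧
      ∀ (d : ℕ), 1 ≤ d →
        ∀ A : Finset (EuclideanSpace ℝ (Fin d)),
          A.Nonempty →
          (∀ a ∈ A, ‖a‖ ≤ 1) →
          Submodule.span ℝ (A : Set (EuclideanSpace ℝ (Fin d))) = ⊤ →
          ∃ C : Finset (EuclideanSpace ℝ (Fin d)), C ⊆ A ∧
            (C.card : ℝ) ≤ B * d ∧
            Submodule.span ℝ (C : Set (EuclideanSpace ℝ (Fin d))) = ⊤ ∧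
            ∃ π : EuclideanSpace ℝ (Fin d) → ℝ,
              (∀ α ∈ C, π α ∈ Set.Icc (0 : ℝ) 1) ∧
              (∑ α ∈ C, π α) = 1 ∧
              IsUnit (∑ α ∈ C, π α • vecMulVec (α : Fin d → ℝ) (α : Fin d → ℝ)) ∧
              ∀ a ∈ A,
                (a : Fin d → ℝ) ⬝ᵥ
                  (∑ α ∈ C, π α • vecMulVec (α : Fin d → ℝ) (α : Fin d → ℝ))⁻¹ *ᵥ
                    (a : Fin d → ℝ) ≤ 2 * d := by
  classical
  refine ⟨2, one_le_two, ?_⟩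
  intro d hd A hA _hnorm hspan
  obtain ⟨C, hCA, hCcard, hCne, hudet, hbound⟩ := CoreSetAux.main d hd A hA hspan
  have hunit : IsUnit (CoreSetAux.Msum C) := (Matrix.isUnit_iff_isUnit_det _).2 hudet
  have hCspan := CoreSetAux.span_top_of_isUnit hunit
  have hk0 : (0 : ℝ) < (C.card : ℝ) := by exact_mod_cast hCne.card_pos
  have hk1 : (1 : ℝ) ≤ (C.card : ℝ) := by exact_mod_cast hCne.card_pos
  have hV : (∑ α ∈ C, (fun _ : EuclideanSpace ℝ (Fin d) => ((C.card : ℝ))⁻¹) α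
        • vecMulVec (α : Fin d → ℝ) (α : Fin d → ℝ))
      = ((C.card : ℝ))⁻¹ • CoreSetAux.Msum C := by
    rw [CoreSetAux.Msum, Finset.smul_sum]
  have hVunit : IsUnit (((C.card : ℝ))⁻¹ • CoreSetAux.Msum C) := by
    rw [Matrix.isUnit_iff_isUnit_det, Matrix.det_smul, isUnit_iff_ne_zero]
    exact mul_ne_zero (pow_ne_zero _ (inv_ne_zero hk0.ne'))
      (isUnit_iff_ne_zero.1 hudet)
  have hVinv : (((C.card : ℝ))⁻¹ • CoreSetAux.Msum C)⁻¹
      = (C.card : ℝ) • (CoreSetAux.Msum C)⁻¹ := by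
    apply Matrix.inv_eq_right_inv
    rw [Matrix.smul_mul, Matrix.mul_smul, smul_smul, Matrix.mul_nonsing_inv _ hudet,
      inv_mul_cancel₀ hk0.ne', one_smul]
  refine ⟨C, hCA, ?_, hCspan, fun _ => ((C.card : ℝ))⁻¹, ?_, ?_, ?_, ?_⟩
  · have : (C.card : ℝ) ≤ 2 * d := by exact_mod_cast hCcard
    linarith
  · intro α _
    exact ⟨le_of_lt (inv_pos.2 hk0), inv_le_one_of_one_le₀ hk1⟩
  · rw [Finset.sum_const, nsmul_eq_mul, mul_inv_cancel₀ hk0.ne']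
  · rw [hV]
    exact hVunit
  · intro a ha
    rw [hV, hVinv, Matrix.smul_mulVec, dotProduct_smul, smul_eq_mul]
    have h1 := hbound a ha
    have h0 : (0 : ℝ) ≤ (a : Fin d → ℝ) ⬝ᵥ (CoreSetAux.Msum C)⁻¹ *ᵥ (a : Fin d → ℝ) := by
      have hPD : (CoreSetAux.Msum C).PosDef :=
        CoreSetAux.posDef_of_posSemidef_isUnit (CoreSetAux.Msum_posSemidef C) hunit
      have := hPD.inv.posSemidef.dotProduct_mulVec_nonneg (a : Fin d → ℝ)
      simpa using this
    have h2 : (C.card : ℝ) ≤ 2 * d := by exact_mod_cast hCcard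
    calc (C.card : ℝ) * ((a : Fin d → ℝ) ⬝ᵥ (CoreSetAux.Msum C)⁻¹ *ᵥ (a : Fin d → ℝ))
        ≤ (C.card : ℝ) * 1 := by nlinarith
      _ = (C.card : ℝ) := mul_one _
      _ ≤ 2 * d := h2
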